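/- Asymptotic validity of FRT with estimated assignment mechanism: let p(ψ) be Fisher's p-value computed with W^rep ~ f(W|X; ψ), assumed continuous in ψ at ψ₀, and let ψ̂ →_p ψ₀. If under the truth Pr(p(ψ₀) ≤ α') ≤ α' for all α' ∈ [0,1], then limsup_{n→∞} Pr(p(ψ̂) ≤ α) ≤ α for every α ∈ (0,1). -/

import Mathlib

open MeasureTheory Filter

/-- Lemma 2: asymptotic validity of FRT with an estimated assignment mechanism.
`pfun ψ ω` is Fisher's p-value computed with `W^rep ~ f(W|X;ψ)` on the data `ω`; it is
continuous in `ψ` at `ψ₀`, the estimators `ψ̂_n` converge in probability to `ψ₀`, and at the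
truth `Pr(p(ψ₀) ≤ α') ≤ α'` for all `α' ∈ [0,1]`.  Then
`limsup_n Pr(p(ψ̂_n) ≤ α) ≤ α` for every `α ∈ (0,1)`. -/
theorem stmt12
    {Ω Ψ : Type*} [MeasurableSpace Ω] [PseudoMetricSpace Ψ] [MeasurableSpace Ψ]
    (μ : Measure Ω) [IsProbabilityMeasure μ]
    (pfun : Ψ → Ω → ℝ) (ψ₀ : Ψ) (ψhat : ℕ → Ω → Ψ)
    (hmeas : ∀ n, Measurable (fun ω => pfun (ψhat n ω) ω))
    (h01 : ∀ ψ ω, pfun ψ ω ∈ Set.Icc (0 : ℝ) 1)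
    -- continuity of the p-value in ψ at ψ₀
    (hcont : ∀ ω, ContinuousAt (fun ψ => pfun ψ ω) ψ₀)
    -- consistency of the estimated assignment mechanism: ψ̂ →_p ψ₀
    (hcons : TendstoInMeasure μ ψhat atTop (fun _ => ψ₀))
    -- validity at the truth
    (hvalid : ∀ α' ∈ Set.Icc (0 : ℝ) 1, μ {ω | pfun ψ₀ ω ≤ α'} ≤ ENNReal.ofReal α') :
    ∀ α ∈ Set.Ioo (0 : ℝ) 1,
      limsup (fun n => μ {ω | pfun (ψhat n ω) ω ≤ α}) atTop ≤ ENNReal.ofReal α := by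
  intro α hα
  -- Step 1: p(ψ̂ₙ) → p(ψ₀) in measure.
  have hY : TendstoInMeasure μ (fun n ω => pfun (ψhat n ω) ω) atTop (fun ω => pfun ψ₀ ω) := by
    -- rephrase consistency via real-valued distances
    have hcons' : TendstoInMeasure μ (fun n ω => dist (ψhat n ω) ψ₀) atTop (fun _ => (0 : ℝ)) := by
      intro ε hε
      have := hcons ε hε
      convert this using 2 with n
      congr 1
      ext x
      simp [Real.dist_eq, abs_of_nonneg dist_nonneg, Real.enorm_eq_ofReal dist_nonneg, edist_dist]
    intro ε hε
    refine tendsto_of_subseq_tendsto fun ns hns => ?_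
    -- along the subsequence, still convergence in measure
    have hsub : TendstoInMeasure μ (fun k ω => dist (ψhat (ns k) ω) ψ₀) atTop
        (fun _ => (0 : ℝ)) := fun δ hδ => (hcons' δ hδ).comp hns
    obtain ⟨ms, -, hms⟩ := hsub.exists_seq_tendsto_ae
    -- a.e. convergence of ψ̂ along the sub-subsequence
    have hae : ∀ᵐ ω ∂μ, Tendsto (fun k => ψhat (ns (ms k)) ω) atTop (nhds ψ₀) := by
      filter_upwards [hms] with ω hω
      rw [tendsto_iff_dist_tendsto_zero]
      exact hω
    -- hence a.e. convergence of the p-values by continuity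
    have haep : ∀ᵐ ω ∂μ,
        Tendsto (fun k => pfun (ψhat (ns (ms k)) ω) ω) atTop (nhds (pfun ψ₀ ω)) := by
      filter_upwards [hae] with ω hω
      exact (hcont ω).tendsto.comp hω
    have htm : TendstoInMeasure μ (fun k ω => pfun (ψhat (ns (ms k)) ω) ω) atTop
        (fun ω => pfun ψ₀ ω) :=
      tendstoInMeasure_of_tendsto_ae
        (fun k => ((hmeas (ns (ms k))).stronglyMeasurable).aestronglyMeasurable) haep
    exact ⟨ms, htm ε hε⟩
  -- Step 2: the ε-γ argument for the limsup bound.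
  refine ENNReal.le_of_forall_pos_le_add fun ε hε _ => ?_
  set γ : ℝ := min (ε : ℝ) (1 - α) with hγdef
  have hγpos : 0 < γ := lt_min (by exact_mod_cast hε) (by linarith [hα.2])
  have hαγ : α + γ ∈ Set.Icc (0 : ℝ) 1 := by
    constructor
    · linarith [hα.1, hγpos]
    · have := min_le_right (ε : ℝ) (1 - α)
      have : γ ≤ 1 - α := this
      linarith
  -- the key inclusion
  have hincl : ∀ n, {ω | pfun (ψhat n ω) ω ≤ α} ⊆
      {ω | pfun ψ₀ ω ≤ α + γ} ∪ {ω | γ ≤ dist (pfun (ψhat n ω) ω) (pfun ψ₀ ω)} := by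
    intro n ω hω
    simp only [Set.mem_setOf_eq] at hω
    by_cases hd : γ ≤ dist (pfun (ψhat n ω) ω) (pfun ψ₀ ω)
    · exact Or.inr hd
    · left
      push_neg at hd
      rw [Real.dist_eq, abs_lt] at hd
      simp only [Set.mem_setOf_eq]
      linarith [hd.1]
  have hbound : ∀ n, μ {ω | pfun (ψhat n ω) ω ≤ α} ≤
      μ {ω | pfun ψ₀ ω ≤ α + γ} + μ {ω | γ ≤ dist (pfun (ψhat n ω) ω) (pfun ψ₀ ω)} :=
    fun n => le_trans (measure_mono (hincl n)) (measure_union_le _ _)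
  have htend : Tendsto (fun n => μ {ω | pfun ψ₀ ω ≤ α + γ} +
      μ {ω | γ ≤ dist (pfun (ψhat n ω) ω) (pfun ψ₀ ω)}) atTop
      (nhds (μ {ω | pfun ψ₀ ω ≤ α + γ} + 0)) :=
    Tendsto.const_add _ ((hY (ENNReal.ofReal γ) (ENNReal.ofReal_pos.mpr hγpos)).congr fun n => by
      congr 1; ext ω; simp [edist_dist, ENNReal.ofReal_le_ofReal_iff dist_nonneg])
  have hlimsup : limsup (fun n => μ {ω | pfun (ψhat n ω) ω ≤ α}) atTop ≤
      μ {ω | pfun ψ₀ ω ≤ α + γ} := by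
    calc limsup (fun n => μ {ω | pfun (ψhat n ω) ω ≤ α}) atTop
        ≤ limsup (fun n => μ {ω | pfun ψ₀ ω ≤ α + γ} +
            μ {ω | γ ≤ dist (pfun (ψhat n ω) ω) (pfun ψ₀ ω)}) atTop :=
          limsup_le_limsup (Eventually.of_forall hbound)
      _ = μ {ω | pfun ψ₀ ω ≤ α + γ} + 0 := htend.limsup_eq
      _ = μ {ω | pfun ψ₀ ω ≤ α + γ} := add_zero _
  refine hlimsup.trans ?_
  calc μ {ω | pfun ψ₀ ω ≤ α + γ} ≤ ENNReal.ofReal (α + γ) := hvalid _ hαγ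
    _ ≤ ENNReal.ofReal α + ENNReal.ofReal γ := ENNReal.ofReal_add_le
    _ ≤ ENNReal.ofReal α + ε := by
        gcongr
        calc ENNReal.ofReal γ ≤ ENNReal.ofReal (ε : ℝ) :=
              ENNReal.ofReal_le_ofReal (min_le_left _ _)
          _ = ε := ENNReal.ofReal_coe_nnreal
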